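/- Let A be a real n×n matrix, B a real n×m matrix, X a real n×N matrix, U a real m×N matrix, and X′ := A·X + B·U. Let Q be a real N×n matrix such that P := X·Q is symmetric positive definite and the 2n×2n symmetric block matrix [[X·Q, X′·Q], [(X′·Q)ᵀ, X·Q]] is positive definite. Then, with K := U·Q·(X·Q)⁻¹ and M := A + B·K, the matrix M·P·Mᵀ − P is negative definite; in particular every complex eigenvalue of A + B·K has modulus strictly less than 1, so the feedback gain K stabilizes the discrete-time system x′ = Ax + Bu. -/

import Mathlib

open Matrix Polynomial

lemma dpt_dot_aux {k : ℕ} (G H : Matrix (Fin k) (Fin k) ℝ) (v w : Fin k → ℝ) :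
    (G *ᵥ v) ⬝ᵥ (H *ᵥ w) = v ⬝ᵥ ((Gᵀ * H) *ᵥ w) := by
  rw [dotProduct_mulVec, dotProduct_mulVec, ← vecMul_vecMul, vecMul_transpose]

lemma dpt_re_dot {k : ℕ} (R : Matrix (Fin k) (Fin k) ℝ) (w : Fin k → ℂ) :
    (star w ⬝ᵥ (R.map (Complex.ofReal)) *ᵥ w).re
      = (fun i => (w i).re) ⬝ᵥ R *ᵥ (fun i => (w i).re)
        + (fun i => (w i).im) ⬝ᵥ R *ᵥ (fun i => (w i).im) := by
  simp only [dotProduct, mulVec, map_apply, Pi.star_apply, RCLike.star_def,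
    Complex.re_sum, Finset.mul_sum, ← Finset.sum_add_distrib]
  refine Finset.sum_congr rfl fun i _ => ?_
  refine Finset.sum_congr rfl fun j _ => ?_
  simp [Complex.mul_re, Complex.mul_im]

lemma dpt_map_mul {k l p : ℕ} (G : Matrix (Fin k) (Fin l) ℝ) (H : Matrix (Fin l) (Fin p) ℝ) :
    (G * H).map Complex.ofReal = G.map Complex.ofReal * H.map Complex.ofReal := by
  ext i j
  simp [Matrix.mul_apply]

lemma dpt_map_sub {k l : ℕ} (G H : Matrix (Fin k) (Fin l) ℝ) :
    (G - H).map Complex.ofReal = G.map Complex.ofReal - H.map Complex.ofReal := by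
  ext i j
  simp

lemma dpt_map_transpose {k l : ℕ} (G : Matrix (Fin k) (Fin l) ℝ) :
    (G.map Complex.ofReal)ᵀ = Gᵀ.map Complex.ofReal := by
  ext i j
  simp

lemma dpt_mulVec_star {k : ℕ} (R : Matrix (Fin k) (Fin k) ℝ) (w : Fin k → ℂ) :
    (R.map (Complex.ofReal)) *ᵥ (star w) = star ((R.map (Complex.ofReal)) *ᵥ w) := by
  funext i
  simp [mulVec, dotProduct, map_sum, Complex.conj_ofReal]

theorem de_persis_tesi_stabilization {n m N : ℕ}
    (A : Matrix (Fin n) (Fin n) ℝ) (B : Matrix (Fin n) (Fin m) ℝ)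
    (X : Matrix (Fin n) (Fin N) ℝ) (U : Matrix (Fin m) (Fin N) ℝ)
    (Q : Matrix (Fin N) (Fin n) ℝ)
    (hPsymm : (X * Q)ᵀ = X * Q)
    (hPpos : ∀ v : Fin n → ℝ, v ≠ 0 → 0 < v ⬝ᵥ (X * Q).mulVec v)
    (hLMI : ∀ v : (Fin n ⊕ Fin n) → ℝ, v ≠ 0 →
      0 < v ⬝ᵥ (Matrix.fromBlocks (X * Q) ((A * X + B * U) * Q)
        ((A * X + B * U) * Q)ᵀ (X * Q)).mulVec v) :
    (∀ v : Fin n → ℝ, v ≠ 0 →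
      v ⬝ᵥ ((A + B * (U * Q * (X * Q)⁻¹)) * (X * Q) * (A + B * (U * Q * (X * Q)⁻¹))ᵀ
        - X * Q).mulVec v < 0) ∧
    (∀ μ : ℂ, ((A + B * (U * Q * (X * Q)⁻¹)).map Complex.ofReal).charpoly.IsRoot μ →
      ‖μ‖ < 1) := by
  set P : Matrix (Fin n) (Fin n) ℝ := X * Q with hPdef
  set F : Matrix (Fin n) (Fin n) ℝ := (A * X + B * U) * Q with hFdef
  set M : Matrix (Fin n) (Fin n) ℝ := A + B * (U * Q * P⁻¹) with hMdef
  -- invertibility of P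
  have hdet : IsUnit P.det := by
    have hPD : P.PosDef := by
      refine Matrix.posDef_iff_dotProduct_mulVec.mpr ⟨?_, fun x hx => ?_⟩
      · show Pᴴ = P
        simpa using hPsymm
      · simpa using hPpos x hx
    exact isUnit_iff_ne_zero.mpr hPD.det_pos.ne'
  have hPinvsymm : (P⁻¹)ᵀ = P⁻¹ := by rw [transpose_nonsing_inv, hPsymm]
  -- Schur complement positivity
  have hSchur : ∀ v : Fin n → ℝ, v ≠ 0 →
      0 < v ⬝ᵥ ((P - F * P⁻¹ * Fᵀ) *ᵥ v) := by
    intro v hv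
    have hvb : Sum.elim v (-((P⁻¹ * Fᵀ) *ᵥ v)) ≠ 0 := by
      intro h
      exact hv (funext fun i => congrFun h (Sum.inl i))
    have h := hLMI _ hvb
    rw [fromBlocks_mulVec, sumElim_dotProduct_sumElim] at h
    simp only [Sum.elim_comp_inl, Sum.elim_comp_inr, mulVec_neg, mulVec_mulVec,
      dotProduct_add, dotProduct_neg, neg_dotProduct, neg_neg] at h
    rw [dpt_dot_aux, dpt_dot_aux] at h
    have ht : (P⁻¹ * Fᵀ)ᵀ = F * P⁻¹ := by
      rw [transpose_mul, transpose_transpose, hPinvsymm]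
    rw [ht] at h
    have h1 : F * (P⁻¹ * Fᵀ) = F * P⁻¹ * Fᵀ := by rw [mul_assoc]
    have h2 : F * P⁻¹ * (P * (P⁻¹ * Fᵀ)) = F * P⁻¹ * Fᵀ := by
      rw [mul_nonsing_inv_cancel_left _ _ hdet]
    rw [h1, h2] at h
    rw [sub_mulVec, dotProduct_sub]
    linarith
  -- closed loop identities
  have hMP : M * P = F := by
    have h1 : U * Q * P⁻¹ * P = U * Q := nonsing_inv_mul_cancel_right _ _ hdet
    calc M * P = A * P + B * (U * Q * P⁻¹) * P := Matrix.add_mul _ _ _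
    _ = A * P + B * (U * Q * P⁻¹ * P) := by rw [Matrix.mul_assoc B (U * Q * P⁻¹) P]
    _ = A * P + B * (U * Q) := by rw [h1]
    _ = A * X * Q + B * U * Q := by
        rw [hPdef, ← Matrix.mul_assoc A X Q, ← Matrix.mul_assoc B U Q]
    _ = F := (Matrix.add_mul (A * X) (B * U) Q).symm
  have hFt : Fᵀ = P * Mᵀ := by
    rw [← hMP, transpose_mul, hPsymm]
  have hKey : M * P * Mᵀ - P = -(P - F * P⁻¹ * Fᵀ) := by
    have h : F * P⁻¹ * Fᵀ = M * P * Mᵀ := by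
      rw [hFt, mul_assoc F P⁻¹ (P * Mᵀ), nonsing_inv_mul_cancel_left _ _ hdet, ← hMP]
    rw [h, neg_sub]
  -- part 1
  have part1 : ∀ v : Fin n → ℝ, v ≠ 0 → v ⬝ᵥ ((M * P * Mᵀ - P) *ᵥ v) < 0 := by
    intro v hv
    rw [hKey, neg_mulVec, dotProduct_neg]
    linarith [hSchur v hv]
  have part1' : ∀ v : Fin n → ℝ, v ⬝ᵥ ((M * P * Mᵀ - P) *ᵥ v) ≤ 0 := by
    intro v
    by_cases hv : v = 0
    · simp [hv]
    · exact (part1 v hv).le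
  have hPpos' : ∀ v : Fin n → ℝ, 0 ≤ v ⬝ᵥ (P *ᵥ v) := by
    intro v
    by_cases hv : v = 0
    · simp [hv]
    · exact (hPpos v hv).le
  refine ⟨part1, ?_⟩
  -- part 2
  intro μ hμ
  set Mc : Matrix (Fin n) (Fin n) ℂ := M.map Complex.ofReal with hMc
  -- determinant vanishes
  have hdet0 : (Matrix.diagonal (fun _ : Fin n => μ) - Mc).det = 0 := by
    have h1 : Polynomial.eval μ Mc.charpoly = 0 := hμ
    have h2 := RingHom.map_det (Polynomial.evalRingHom μ) (charmatrix Mc)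
    have h3 : (charmatrix Mc).map (Polynomial.evalRingHom μ)
        = Matrix.diagonal (fun _ : Fin n => μ) - Mc := by
      ext i j
      by_cases hij : i = j
      · subst hij; simp [charmatrix_apply_eq]
      · simp [charmatrix_apply_ne _ _ _ hij, Matrix.diagonal_apply_ne _ hij]
    rw [← h3]
    rw [Matrix.charpoly] at h1
    simpa [RingHom.mapMatrix_apply] using h2.symm.trans h1
  have hdetT : (Matrix.diagonal (fun _ : Fin n => μ) - Mcᵀ).det = 0 := by
    have h : (Matrix.diagonal (fun _ : Fin n => μ) - Mcᵀ)
        = (Matrix.diagonal (fun _ : Fin n => μ) - Mc)ᵀ := by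
      rw [transpose_sub, diagonal_transpose]
    rw [h, det_transpose]
    exact hdet0
  obtain ⟨w, hw0, hww⟩ := (Matrix.exists_mulVec_eq_zero_iff).mpr hdetT
  have heig : Mcᵀ *ᵥ w = μ • w := by
    rw [sub_mulVec] at hww
    have hdw : (Matrix.diagonal (fun _ : Fin n => μ)) *ᵥ w = μ • w := by
      funext i; simp [mulVec_diagonal]
    rw [hdw] at hww
    exact (sub_eq_zero.mp hww).symm
  -- real and imaginary parts
  set a : Fin n → ℝ := fun i => (w i).re with ha
  set b : Fin n → ℝ := fun i => (w i).im with hb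
  have hab : a ≠ 0 ∨ b ≠ 0 := by
    by_contra hc
    push_neg at hc
    apply hw0
    funext i
    have h1 := congrFun hc.1 i
    have h2 := congrFun hc.2 i
    simp only [ha, hb, Pi.zero_apply] at h1 h2
    exact Complex.ext h1 h2
  set Pc : Matrix (Fin n) (Fin n) ℂ := P.map Complex.ofReal with hPc
  set t : ℂ := star w ⬝ᵥ (Pc *ᵥ w) with htdef
  have htre : 0 < t.re := by
    have hre := dpt_re_dot P w
    rw [← hPc, ← htdef, ← ha, ← hb] at hre
    rcases hab with h | h
    · have h1 := hPpos a h
      have h2 := hPpos' b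
      rw [hre]; linarith
    · have h1 := hPpos' a
      have h2 := hPpos b h
      rw [hre]; linarith
  -- the Lyapunov quadratic form over ℂ
  have hSre : (star w ⬝ᵥ ((M * P * Mᵀ - P).map Complex.ofReal *ᵥ w)).re < 0 := by
    have hre := dpt_re_dot (M * P * Mᵀ - P) w
    rw [← ha, ← hb] at hre
    rcases hab with h | h
    · have h1 := part1 a h
      have h2 := part1' b
      rw [hre]; linarith
    · have h1 := part1' a
      have h2 := part1 b h
      rw [hre]; linarith
  -- compute the quadratic form using the eigenvector relation
  have hstar : Mcᵀ *ᵥ (star w) = star (Mcᵀ *ᵥ w) := by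
    have h := dpt_mulVec_star Mᵀ w
    rw [← dpt_map_transpose] at h
    exact h
  have hcalc : star w ⬝ᵥ ((M * P * Mᵀ - P).map Complex.ofReal *ᵥ w)
      = ((Complex.normSq μ : ℂ) - 1) * t := by
    have hmapmul : (M * P * Mᵀ - P).map Complex.ofReal = Mc * Pc * Mcᵀ - Pc := by
      rw [dpt_map_sub, dpt_map_mul, dpt_map_mul, ← dpt_map_transpose]
    rw [hmapmul, sub_mulVec, dotProduct_sub]
    have h1 : (Mc * Pc * Mcᵀ) *ᵥ w = Mc *ᵥ (Pc *ᵥ (Mcᵀ *ᵥ w)) := by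
      rw [← mulVec_mulVec, ← mulVec_mulVec]
    have h2 : Mc *ᵥ (Pc *ᵥ (Mcᵀ *ᵥ w)) = μ • (Mc *ᵥ (Pc *ᵥ w)) := by
      rw [heig, mulVec_smul, mulVec_smul]
    have h3 : star w ⬝ᵥ (Mc *ᵥ (Pc *ᵥ w)) = (starRingEnd ℂ μ) * t := by
      rw [dotProduct_mulVec, ← mulVec_transpose, hstar, heig]
      have : star (μ • w) = (starRingEnd ℂ μ) • star w := by
        funext i; simp [mul_comm]
      rw [this, smul_dotProduct, htdef]
      simp [smul_eq_mul]
    rw [h1, h2, dotProduct_smul, h3, ← htdef]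
    have : (μ * ((starRingEnd ℂ) μ * t)) = (Complex.normSq μ : ℂ) * t := by
      rw [← mul_assoc, mul_comm μ _, Complex.normSq_eq_conj_mul_self]
    rw [smul_eq_mul, this]
    ring
  -- conclude
  have hfin : (Complex.normSq μ - 1) * t.re < 0 := by
    have := hSre
    rw [hcalc] at this
    have hrew : (((Complex.normSq μ : ℂ) - 1) * t).re = (Complex.normSq μ - 1) * t.re := by
      simp [Complex.mul_re, Complex.sub_re, Complex.ofReal_re, Complex.sub_im]
    rw [hrew] at this
    exact this
  have hlt : Complex.normSq μ < 1 := by nlinarith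
  have habs : ‖μ‖ ^ 2 = Complex.normSq μ := Complex.sq_norm μ
  nlinarith [norm_nonneg μ, habs]
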